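/- Let G be a finite commutative group and let g₁, …, g_d ∈ G generate G. Suppose the relation lattice L(g₁,…,g_d) ⊆ ℤ^d has a ℤ-basis b₁, …, b_d with ‖bᵢ‖ ≤ T for all i, for some real T > 0. Then every element u ∈ G can be written as u = ∏_{i=1}^{d} gᵢ^{zᵢ} for some (z₁,…,z_d) ∈ ℤ^d of Euclidean norm at most √d · T. -/

import Mathlib

open Submodule Finset

/-- The relation lattice `L(g₁,…,gₜ) = {(z₁,…,zₜ) ∈ ℤᵗ : ∏ᵢ gᵢ^{zᵢ} = 1}`,
as an additive subgroup of `ℤᵗ`. -/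
def relLattice {G : Type*} [CommGroup G] {t : ℕ} (g : Fin t → G) :
    AddSubgroup (Fin t → ℤ) where
  carrier := {z | ∏ i, g i ^ z i = 1}
  zero_mem' := by simp
  add_mem' := by
    intro a b ha hb
    simp only [Set.mem_setOf_eq, Pi.add_apply] at *
    simp [zpow_add, Finset.prod_mul_distrib, ha, hb]
  neg_mem' := by
    intro a ha
    simp only [Set.mem_setOf_eq, Pi.neg_apply] at *
    simp [zpow_neg, Finset.prod_inv_distrib, ha]

/-- The Euclidean norm of an integer vector. -/
noncomputable def intNorm {d : ℕ} (z : Fin d → ℤ) : ℝ :=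
  Real.sqrt (∑ i, ((z i : ℝ)) ^ 2)

/-- Minimality of the orthogonal projection. -/
lemma projMin {E : Type*} [NormedAddCommGroup E] [InnerProductSpace ℝ E]
    (K : Submodule ℝ E) [CompleteSpace K] (u v : E) (hv : v ∈ K) :
    ‖u - ↑(orthogonalProjection K u)‖ ≤ ‖u - v‖ := by
  set p : E := ↑(orthogonalProjection K u)
  have hp : p ∈ K := (orthogonalProjection K u).2
  have horth : u - p ∈ Kᗮ := sub_starProjection_mem_orthogonal u
  have hinner : inner ℝ (u - p) (p - v) = (0 : ℝ) := by
    rw [real_inner_comm]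
    exact inner_right_of_mem_orthogonal (Submodule.sub_mem K hp hv) horth
  have hdecomp : u - v = (u - p) + (p - v) := by abel
  have hsq : ‖u - v‖ ^ 2 = ‖u - p‖ ^ 2 + ‖p - v‖ ^ 2 := by
    rw [hdecomp, norm_add_sq_real, hinner]; ring
  have h2 : ‖u - p‖ ^ 2 ≤ ‖u - v‖ ^ 2 := by
    rw [hsq]; nlinarith [sq_nonneg ‖p - v‖]
  calc ‖u - p‖ = Real.sqrt (‖u - p‖ ^ 2) := (Real.sqrt_sq (norm_nonneg _)).symm
    _ ≤ Real.sqrt (‖u - v‖ ^ 2) := Real.sqrt_le_sqrt h2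
    _ = ‖u - v‖ := Real.sqrt_sq (norm_nonneg _)

/-- Babai's nearest plane: covering radius squared bound. -/
lemma babai {E : Type*} [NormedAddCommGroup E] [InnerProductSpace ℝ E] :
    ∀ (n : ℕ) (b : Fin n → E), ∀ x ∈ Submodule.span ℝ (Set.range b),
    ∃ c : Fin n → ℤ, ‖x - ∑ i, (c i : ℝ) • b i‖ ^ 2 ≤ (1/4) * ∑ i, ‖b i‖ ^ 2 := by
  intro n
  induction n with
  | zero =>
    intro b x hx
    refine ⟨0, ?_⟩
    have : Set.range b = ∅ := Set.range_eq_empty b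
    rw [this, Submodule.span_empty, Submodule.mem_bot] at hx
    simp [hx]
  | succ n IH =>
    intro b x hx
    obtain ⟨r, hr⟩ := mem_span_range_iff_exists_fun ℝ |>.mp hx
    set b' : Fin n → E := fun i => b i.castSucc with hb'
    set bl : E := b (Fin.last n) with hbl
    haveI : FiniteDimensional ℝ (span ℝ (Set.range b')) :=
      FiniteDimensional.span_of_finite ℝ (Set.finite_range b')
    set K := span ℝ (Set.range b') with hK
    set m : ℤ := round (r (Fin.last n)) with hm
    set f : ℝ := r (Fin.last n) - m with hf
    have hfle : |f| ≤ 1/2 := abs_sub_round _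
    set s : E := ∑ i : Fin n, r i.castSucc • b' i with hs
    have hsK : s ∈ K := sum_mem fun i _ => smul_mem _ _ (subset_span (Set.mem_range_self i))
    set y : E := x - (m : ℝ) • bl with hy
    have hysf : y = s + f • bl := by
      rw [hy, ← hr, Fin.sum_univ_castSucc, hf, sub_smul]
      abel
    set p : E := ↑(orthogonalProjection K y) with hp
    have hpK : p ∈ K := (orthogonalProjection K y).2
    have horth : y - p ∈ Kᗮ := sub_starProjection_mem_orthogonal y
    set q : E := ↑(orthogonalProjection K bl) with hq
    have hqK : q ∈ K := (orthogonalProjection K bl).2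
    have hql : ‖bl - q‖ ≤ ‖bl‖ := by
      have := projMin K bl 0 (zero_mem K)
      rw [hq]; simpa using this
    have h1 : ‖y - p‖ ≤ ‖y - (s + f • q)‖ :=
      projMin K y _ (Submodule.add_mem K hsK (smul_mem _ _ hqK))
    have h2 : y - (s + f • q) = f • (bl - q) := by
      rw [hysf, smul_sub]; abel
    have h3 : ‖y - p‖ ≤ (1/2) * ‖bl‖ := by
      calc ‖y - p‖ ≤ ‖y - (s + f • q)‖ := h1
        _ = |f| * ‖bl - q‖ := by rw [h2, norm_smul, Real.norm_eq_abs]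
        _ ≤ (1/2) * ‖bl‖ :=
          mul_le_mul hfle hql (norm_nonneg _) (by norm_num)
    obtain ⟨c', hc'⟩ := IH b' p hpK
    set v : E := ∑ i, (c' i : ℝ) • b' i with hv
    have hvK : v ∈ K := sum_mem fun i _ => smul_mem _ _ (subset_span (Set.mem_range_self i))
    refine ⟨Fin.snoc c' m, ?_⟩
    have hsum : ∑ i : Fin (n+1), ((Fin.snoc c' m : Fin (n+1) → ℤ) i : ℝ) • b i
        = v + (m : ℝ) • bl := by
      rw [Fin.sum_univ_castSucc]
      simp [hv, hb', hbl]
    rw [hsum]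
    have hxy : x - (v + (m : ℝ) • bl) = (y - p) + (p - v) := by
      rw [hy]; abel
    rw [hxy]
    have hinner : inner ℝ (y - p) (p - v) = (0 : ℝ) := by
      rw [real_inner_comm]
      exact inner_right_of_mem_orthogonal (Submodule.sub_mem K hpK hvK) horth
    rw [norm_add_sq_real, hinner]
    have hyp2 : ‖y - p‖ ^ 2 ≤ (1/4) * ‖bl‖ ^ 2 := by
      nlinarith [norm_nonneg (y - p), norm_nonneg bl]
    have hsplit : ∑ i : Fin (n+1), ‖b i‖ ^ 2 = (∑ i : Fin n, ‖b' i‖ ^ 2) + ‖bl‖ ^ 2 := by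
      rw [Fin.sum_univ_castSucc]
    rw [hsplit]
    nlinarith [hc']

/-- If `g₁,…,g_d` generate the finite commutative group `G` and the relation lattice
`L(g₁,…,g_d)` has a ℤ-basis of vectors of norm at most `T`, then every `u ∈ G` can be
written as `u = ∏ᵢ gᵢ^{zᵢ}` with `‖z‖ ≤ √d · T`. -/
theorem statement6 {G : Type*} [CommGroup G] [Finite G] (d : ℕ) (hd : 0 < d)
    (g : Fin d → G) (hgen : Subgroup.closure (Set.range g) = ⊤)
    (T : ℝ) (hT : 0 < T) (b : Fin d → (Fin d → ℤ))
    (hbmem : ∀ i, b i ∈ relLattice g)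
    (hbasis : ∀ z ∈ relLattice g, ∃! c : Fin d → ℤ, z = ∑ i, c i • b i)
    (hbnorm : ∀ i, intNorm (b i) ≤ T) :
    ∀ u : G, ∃ z : Fin d → ℤ,
      u = ∏ i, g i ^ z i ∧ intNorm z ≤ Real.sqrt d * T := by
  intro u
  -- Step A: surjectivity of z ↦ ∏ gᵢ^{zᵢ}
  have hsurj : ∃ x : Fin d → ℤ, ∏ i, g i ^ x i = u := by
    let S : Subgroup G :=
    { carrier := {w | ∃ x : Fin d → ℤ, ∏ i, g i ^ x i = w}
      one_mem' := ⟨0, by simp⟩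
      mul_mem' := by
        rintro w₁ w₂ ⟨x₁, hx₁⟩ ⟨x₂, hx₂⟩
        exact ⟨x₁ + x₂, by simp [Pi.add_apply, zpow_add, Finset.prod_mul_distrib, hx₁, hx₂]⟩
      inv_mem' := by
        rintro w ⟨x, hx⟩
        exact ⟨-x, by simp [Pi.neg_apply, zpow_neg, Finset.prod_inv_distrib, hx]⟩ }
    have hle : Subgroup.closure (Set.range g) ≤ S := by
      rw [Subgroup.closure_le]
      rintro w ⟨j, rfl⟩
      refine ⟨Pi.single j 1, ?_⟩
      rw [Finset.prod_eq_single j]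
      · simp
      · intro i _ hij
        simp [Pi.single_apply, hij]
      · simp
    have : u ∈ S := by rw [hgen] at hle; exact hle (Subgroup.mem_top u)
    exact this
  obtain ⟨x, hx⟩ := hsurj
  -- Setup in Euclidean space
  set E := EuclideanSpace ℝ (Fin d)
  let ι : (Fin d → ℤ) → E := fun z => WithLp.toLp 2 (fun j => (z j : ℝ))
  let B : Fin d → E := fun i => ι (b i)
  have hsumap : ∀ (v : Fin d → E) (k : Fin d), (∑ i, v i) k = ∑ i, v i k :=
    fun v k => by rw [WithLp.ofLp_sum, Finset.sum_apply]
  have hsmulap : ∀ (r : ℝ) (v : E) (k : Fin d), (r • v) k = r * v k := fun r v k => rfl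
  have hsubap : ∀ (v w : E) (k : Fin d), (v - w) k = v k - w k := fun v w k => rfl
  have hnormι : ∀ z : Fin d → ℤ, ‖ι z‖ = intNorm z := by
    intro z
    rw [EuclideanSpace.norm_eq, intNorm]
    congr 1
    apply Finset.sum_congr rfl
    intro i _
    rw [Real.norm_eq_abs, sq_abs]
  -- Step B: B spans everything
  have hNpos : 0 < Nat.card G := Nat.card_pos
  have hsingle : ∀ j : Fin d, ι (Pi.single j 1) ∈ span ℝ (Set.range B) := by
    intro j
    have hmem : ((Nat.card G : ℤ) • Pi.single j 1 : Fin d → ℤ) ∈ relLattice g := by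
      show ∏ i, g i ^ (((Nat.card G : ℤ) • Pi.single j 1 : Fin d → ℤ) i) = 1
      rw [Finset.prod_eq_single j]
      · simp [Pi.single_apply]
      · intro i _ hij
        simp [Pi.single_apply, hij]
      · simp
    obtain ⟨c, hc, -⟩ := hbasis _ hmem
    have hcast : (Nat.card G : ℝ) • ι (Pi.single j 1) = ∑ i, (c i : ℝ) • B i := by
      ext k
      have hk := congrFun hc k
      simp only [Pi.smul_apply, Finset.sum_apply, smul_eq_mul] at hk
      rw [hsumap]
      simp only [hsmulap, ι, B, Pi.smul_apply, smul_eq_mul]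
      exact_mod_cast hk
    have : ι (Pi.single j 1) = (Nat.card G : ℝ)⁻¹ • ∑ i, (c i : ℝ) • B i := by
      rw [← hcast, smul_smul, inv_mul_cancel₀ (by positivity), one_smul]
    rw [this]
    exact smul_mem _ _ (sum_mem fun i _ => smul_mem _ _ (subset_span (Set.mem_range_self i)))
  have hxmem : ι x ∈ span ℝ (Set.range B) := by
    have : ι x = ∑ j, (x j : ℝ) • ι (Pi.single j 1) := by
      ext k
      rw [hsumap]
      simp only [hsmulap, ι, Pi.single_apply]
      simp
    rw [this]
    exact sum_mem fun j _ => smul_mem _ _ (hsingle j)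
  -- Step C: apply babai
  obtain ⟨c, hc⟩ := babai d B (ι x) hxmem
  refine ⟨x - ∑ i, c i • b i, ?_, ?_⟩
  · have hmem : (∑ i, c i • b i) ∈ relLattice g :=
      sum_mem fun i _ => AddSubgroup.zsmul_mem _ (hbmem i) (c i)
    have h1 : ∏ i, g i ^ ((∑ i, c i • b i : Fin d → ℤ) i) = 1 := hmem
    calc u = (∏ i, g i ^ x i) * (∏ i, g i ^ ((∑ j, c j • b j : Fin d → ℤ) i))⁻¹ := by
            rw [hx, h1]; group
      _ = ∏ i, g i ^ ((x - ∑ j, c j • b j : Fin d → ℤ) i) := by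
            rw [← Finset.prod_inv_distrib, ← Finset.prod_mul_distrib]
            apply Finset.prod_congr rfl
            intro i _
            rw [Pi.sub_apply, zpow_sub]
  · have hι : ι (x - ∑ i, c i • b i) = ι x - ∑ i, (c i : ℝ) • B i := by
      ext k
      rw [hsubap, hsumap]
      simp only [hsmulap, ι, B, Pi.sub_apply, Finset.sum_apply, Pi.smul_apply, smul_eq_mul]
      push_cast
      ring
    rw [← hnormι, hι]
    have hB : ∀ i, ‖B i‖ ≤ T := fun i => by rw [hnormι]; exact hbnorm i
    have hBsq : ∑ i, ‖B i‖ ^ 2 ≤ d * T ^ 2 := by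
      calc ∑ i, ‖B i‖ ^ 2 ≤ ∑ _i : Fin d, T ^ 2 :=
            Finset.sum_le_sum fun i _ =>
              pow_le_pow_left₀ (norm_nonneg _) (hB i) 2
        _ = d * T ^ 2 := by simp [mul_comm]
    have hfinal : ‖ι x - ∑ i, (c i : ℝ) • B i‖ ^ 2 ≤ (Real.sqrt d * T) ^ 2 := by
      rw [mul_pow, Real.sq_sqrt (Nat.cast_nonneg d)]
      nlinarith
    calc ‖ι x - ∑ i, (c i : ℝ) • B i‖
        = Real.sqrt (‖ι x - ∑ i, (c i : ℝ) • B i‖ ^ 2) := (Real.sqrt_sq (norm_nonneg _)).symm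
      _ ≤ Real.sqrt ((Real.sqrt d * T) ^ 2) := Real.sqrt_le_sqrt hfinal
      _ = Real.sqrt d * T := Real.sqrt_sq (by positivity)
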